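/- arXiv:1608.01528 — 3 statements merged into one kernel-verified Lean document; each statement's English description precedes it below -/
import Mathlib

section
/- Every N-partite causal correlation P can be written as a convex combination P(a|x) = Σ_α q_α · P_α^det(a|x) with weights q_α ≥ 0 summing to 1, where the sum ranges over functions α from the set of input lists x to the set of output lists a such that the deterministic correlation P_α^det(a|x) := δ_{a,α(x)} (equal to 1 if a = α(x) and 0 otherwise) is itself causal. -/
/-- A correlation for the parties in the finite set `S`, where party `i` has input set `X i`
and output set `A i`: a real number `P x a` for each assignment of inputs `x` and outputs `a`
for the parties in `S`. -/
def Corr {ι : Type} (X A : ι → Type) (S : Finset ι) : Type :=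
  ((i : {j // j ∈ S}) → X i.1) → ((i : {j // j ∈ S}) → A i.1) → ℝ

/-- `p` is a probability distribution on the finite type `α`. -/
def IsProbDist {α : Type} [Fintype α] (p : α → ℝ) : Prop :=
  (∀ a, 0 ≤ p a) ∧ ∑ a, p a = 1

/-- Restriction of a tuple indexed by `S` to a subset `T ⊆ S`. -/
def restr {ι : Type} {X : ι → Type} {S T : Finset ι} (h : T ⊆ S)
    (x : (i : {j // j ∈ S}) → X i.1) : (i : {j // j ∈ T}) → X i.1 :=
  fun i => x ⟨i.1, h i.2⟩

theorem erase_sub {ι : Type} [DecidableEq ι] (S : Finset ι) (k : ι) : S.erase k ⊆ S :=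
  fun _ hi => Finset.mem_of_mem_erase hi

theorem sdiff_sub {ι : Type} [DecidableEq ι] (S K : Finset ι) : S \ K ⊆ S :=
  fun _ hi => (Finset.mem_sdiff.mp hi).1

/-- Combine a tuple on `K` and a tuple on `S \ K` into a tuple on `S`. -/
def glue {ι : Type} [DecidableEq ι] {X : ι → Type} {S K : Finset ι} (_ : K ⊆ S)
    (u : (i : {j // j ∈ K}) → X i.1) (v : (i : {j // j ∈ S \ K}) → X i.1) :
    (i : {j // j ∈ S}) → X i.1 :=
  fun i => if h : i.1 ∈ K then u ⟨i.1, h⟩ else v ⟨i.1, Finset.mem_sdiff.mpr ⟨i.2, h⟩⟩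

/-- Insert a value for party `k` into a tuple on `S.erase k`, giving a tuple on `S`. -/
def ins {ι : Type} [DecidableEq ι] {X : ι → Type} {S : Finset ι} {k : ι} (_ : k ∈ S)
    (xk : X k) (u : (i : {j // j ∈ S.erase k}) → X i.1) : (i : {j // j ∈ S}) → X i.1 :=
  fun i => if h : i.1 = k then cast (congrArg X h.symm) xk
    else u ⟨i.1, Finset.mem_erase.mpr ⟨h, i.2⟩⟩

/-- Causal correlations, defined by induction on the number of parties: any single-party
probability distribution is causal; a correlation on a set `S` of at least two parties is
causal iff it is a convex combination, over choices of a party `k ∈ S` acting first, of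
products of a single-party distribution for `k` with causal correlations for the remaining
parties `S.erase k` that may depend on the input and output of party `k`. -/
inductive IsCausal {ι : Type} [DecidableEq ι] (X A : ι → Type) [∀ i, Fintype (A i)] :
    (S : Finset ι) → Corr X A S → Prop
  | base (k : ι) (P : Corr X A {k}) (hP : ∀ x, IsProbDist (P x)) : IsCausal X A {k} P
  | step (S : Finset ι) (hS : 2 ≤ S.card) (P : Corr X A S)
      (q : {j // j ∈ S} → ℝ)
      (Pfirst : (k : {j // j ∈ S}) → X k.1 → A k.1 → ℝ)
      (Prest : (k : {j // j ∈ S}) → X k.1 → A k.1 → Corr X A (S.erase k.1))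
      (hq : ∀ k, 0 ≤ q k)
      (hq1 : ∑ k ∈ S.attach, q k = 1)
      (hPfirst : ∀ k xk, IsProbDist (Pfirst k xk))
      (hPrest : ∀ k xk ak, IsCausal X A (S.erase k.1) (Prest k xk ak))
      (hP : ∀ x a, P x a = ∑ k ∈ S.attach, q k * Pfirst k (x k) (a k) *
            Prest k (x k) (a k) (restr (erase_sub S k.1) x) (restr (erase_sub S k.1) a)) :
      IsCausal X A S P

section AuxLemmas

/-- Abbreviation for tuples / deterministic strategies. -/
abbrev DetFun {ι : Type} (X A : ι → Type) (S : Finset ι) : Type :=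
  ((i : {j // j ∈ S}) → X i.1) → ((i : {j // j ∈ S}) → A i.1)

lemma aux_extract {I : Type} [Fintype I] [DecidableEq I] {B : I → Type} [∀ i, Fintype (B i)]
    (w : (i : I) → B i → ℝ) (hw : ∀ i, ∑ b, w i b = 1) (i0 : I) (F : B i0 → ℝ) :
    ∑ g : (i : I) → B i, (∏ i, w i (g i)) * F (g i0) = ∑ b, w i0 b * F b := by
  have key : ∀ g : (i : I) → B i,
      (∏ i, w i (g i)) * F (g i0)
        = ∏ i, (w i (g i) * if h : i = i0 then F (h ▸ g i) else 1) := by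
    intro g
    rw [Finset.prod_mul_distrib]
    congr 1
    rw [Finset.prod_dite_eq']
    simp
  simp_rw [key]
  rw [← Fintype.prod_sum (f := fun i b => w i b * if h : i = i0 then F (h ▸ b) else 1)]
  rw [Fintype.prod_eq_single i0 (fun i hi => by
    simp only [dif_neg hi, mul_one]; exact hw i)]
  exact Finset.sum_congr rfl fun b _ => by rw [dif_pos rfl]

lemma aux_ins_eq_iff {ι : Type} [DecidableEq ι] {A : ι → Type} {S : Finset ι}
    (k : {j // j ∈ S}) (ak : A k.1) (u : (i : {j // j ∈ S.erase k.1}) → A i.1)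
    (a : (i : {j // j ∈ S}) → A i.1) :
    a = ins k.2 ak u ↔ a k = ak ∧ restr (erase_sub S k.1) a = u := by
  constructor
  · rintro rfl
    refine ⟨by simp [ins], ?_⟩
    funext i
    have hik : i.1 ≠ k.1 := (Finset.mem_erase.mp i.2).1
    simp [restr, ins, hik]
  · rintro ⟨h1, h2⟩
    funext i
    rcases i with ⟨i, hi⟩
    rcases k with ⟨k, hk⟩
    show a ⟨i, hi⟩ = ins hk ak u ⟨i, hi⟩
    by_cases h : i = k
    · subst h
      simpa [ins] using h1
    · have := congrFun h2 ⟨i, Finset.mem_erase.mpr ⟨h, hi⟩⟩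
      simpa [ins, restr, h] using this

/-- The deterministic strategy on `S` built from a choice, for each input of party `k`,
of an output for `k` and a deterministic strategy for the remaining parties. -/
def insFun {ι : Type} [DecidableEq ι] {X A : ι → Type} {S : Finset ι} (k : {j // j ∈ S})
    (g : X k.1 → A k.1 × DetFun X A (S.erase k.1)) : DetFun X A S :=
  fun x => ins k.2 (g (x k)).1 ((g (x k)).2 (restr (erase_sub S k.1) x))

lemma aux_ins_apply_iff {ι : Type} [DecidableEq ι] {X A : ι → Type} [∀ i, Fintype (A i)]
    [∀ i, DecidableEq (A i)] {S : Finset ι} (k : {j // j ∈ S})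
    (g : X k.1 → A k.1 × DetFun X A (S.erase k.1))
    (x : (i : {j // j ∈ S}) → X i.1) (a : (i : {j // j ∈ S}) → A i.1) :
    (if a = insFun k g x then (1 : ℝ) else 0)
      = (if a k = (g (x k)).1 then (1 : ℝ) else 0) *
        (if restr (erase_sub S k.1) a = (g (x k)).2 (restr (erase_sub S k.1) x) then (1:ℝ) else 0) := by
  have h := aux_ins_eq_iff k (g (x k)).1 ((g (x k)).2 (restr (erase_sub S k.1) x)) a
  by_cases h1 : a k = (g (x k)).1 <;>
    by_cases h2 : restr (erase_sub S k.1) a = (g (x k)).2 (restr (erase_sub S k.1) x) <;>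
    simp [insFun, h, h1, h2]

lemma detCausal {ι : Type} [DecidableEq ι] {X A : ι → Type} [∀ i, Fintype (A i)]
    [∀ i, DecidableEq (A i)]
    {S : Finset ι} (hS : 2 ≤ S.card) (k : {j // j ∈ S})
    (Pfirst : (k' : {j // j ∈ S}) → X k'.1 → A k'.1 → ℝ)
    (Prest : (k' : {j // j ∈ S}) → X k'.1 → A k'.1 → Corr X A (S.erase k'.1))
    (hPfirst : ∀ k' xk, IsProbDist (Pfirst k' xk))
    (hPrest : ∀ k' xk ak, IsCausal X A (S.erase k'.1) (Prest k' xk ak))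
    (g : X k.1 → A k.1 × DetFun X A (S.erase k.1))
    (hg : ∀ xk, IsCausal X A (S.erase k.1) (fun u v => if v = (g xk).2 u then (1:ℝ) else 0)) :
    IsCausal X A S (fun x a => if a = insFun k g x then (1:ℝ) else 0) := by
  refine IsCausal.step S hS _ (fun k' => if k' = k then 1 else 0)
    (Function.update Pfirst k (fun xk ak => if ak = (g xk).1 then (1:ℝ) else 0))
    (Function.update Prest k (fun xk ak =>
      if ak = (g xk).1 then (fun u v => if v = (g xk).2 u then (1:ℝ) else 0)
      else Prest k xk ak))
    (fun k' => by by_cases h : k' = k <;> simp [h])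
    (by rw [Finset.sum_ite_eq' S.attach k (fun _ => (1:ℝ))]; simp)
    ?_ ?_ ?_
  · intro k' xk
    by_cases h : k' = k
    · subst h
      rw [Function.update_self]
      refine ⟨fun a => by by_cases hh : a = (g xk).1 <;> simp [hh], ?_⟩
      try dsimp only
      rw [Finset.sum_ite_eq' Finset.univ (g xk).1 (fun _ => (1:ℝ))]
      simp
    · rw [Function.update_of_ne h]
      exact hPfirst k' xk
  · intro k' xk ak
    by_cases h : k' = k
    · subst h
      rw [Function.update_self]
      by_cases hak : ak = (g xk).1
      · have e : (if ak = (g xk).1 then (fun u v => if v = (g xk).2 u then (1:ℝ) else 0 :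
            Corr X A (S.erase k'.1)) else Prest k' xk ak) =
            (fun u v => if v = (g xk).2 u then (1:ℝ) else 0) := if_pos hak
        exact cast (congrArg (IsCausal X A (S.erase k'.1)) e.symm) (hg xk)
      · convert hPrest k' xk ak using 1
        exact if_neg hak
    · rw [Function.update_of_ne h]
      exact hPrest k' xk ak
  · intro x a
    rw [Finset.sum_eq_single k]
    · try dsimp only
      rw [if_pos rfl, Function.update_self, Function.update_self, one_mul,
        aux_ins_apply_iff k g x a]
      try dsimp only
      by_cases h1 : a k = (g (x k)).1
      · simp [h1]
      · simp [h1]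
    · intro b _ hbk
      try dsimp only
      rw [if_neg hbk, zero_mul, zero_mul]
    · intro hk'
      exact absurd (Finset.mem_attach S k) hk'

end AuxLemmas

/-- every causal correlation is a convex combination of deterministic causal
correlations (weights supported on functions `α` whose associated deterministic correlation
is causal). -/
theorem causal_eq_convex_combination_of_deterministic {ι : Type} [DecidableEq ι]
    (X A : ι → Type) [∀ i, Fintype (X i)] [∀ i, Fintype (A i)]
    [∀ i, DecidableEq (X i)] [∀ i, DecidableEq (A i)]
    (S : Finset ι) (P : Corr X A S) (hP : IsCausal X A S P) :
    ∃ q : (((i : {j // j ∈ S}) → X i.1) → ((i : {j // j ∈ S}) → A i.1)) → ℝ,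
      (∀ α, 0 ≤ q α) ∧ (∑ α, q α = 1) ∧
      (∀ α, q α ≠ 0 → IsCausal X A S (fun x a => if a = α x then (1 : ℝ) else 0)) ∧
      (∀ x a, P x a = ∑ α, q α * (if a = α x then (1 : ℝ) else 0)) := by
  induction hP with
  | base k P hP =>
    refine ⟨fun α => ∏ x, P x (α x),
      fun α => Finset.prod_nonneg fun x _ => (hP x).1 (α x), ?_, ?_, ?_⟩
    · rw [← Fintype.prod_sum (f := fun x b => P x b)]
      exact Finset.prod_eq_one fun x _ => (hP x).2
    · intro α _
      have hprob : ∀ x, IsProbDist (fun a => if a = α x then (1:ℝ) else 0) := by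
        intro x
        constructor
        · intro a
          by_cases hh : a = α x <;> simp [hh]
        · rw [Finset.sum_ite_eq' Finset.univ (α x) (fun _ => (1:ℝ))]
          simp
      exact IsCausal.base k _ hprob
    · intro x a
      rw [aux_extract (fun x' b => P x' b) (fun x' => (hP x').2) x
        (fun b => if a = b then (1:ℝ) else 0)]
      simp [mul_ite, Finset.sum_ite_eq]
  | step S hS P qk Pfirst Prest hqk hqk1 hPfirst hPrest hPeq IH =>
    choose r hr0 hr1 hrC hrval using IH
    have hw1 : ∀ (k : {j // j ∈ S}) (xk : X k.1),
        ∑ p : A k.1 × DetFun X A (S.erase k.1), Pfirst k xk p.1 * r k xk p.1 p.2 = 1 := by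
      intro k xk
      rw [Fintype.sum_prod_type]
      calc ∑ ak, ∑ β, Pfirst k xk ak * r k xk ak β
          = ∑ ak, Pfirst k xk ak * ∑ β, r k xk ak β := by
            exact Finset.sum_congr rfl fun ak _ => (Finset.mul_sum _ _ _).symm
        _ = ∑ ak, Pfirst k xk ak := by
            exact Finset.sum_congr rfl fun ak _ => by rw [hr1 k xk ak, mul_one]
        _ = 1 := (hPfirst k xk).2
    have hwnn : ∀ (k : {j // j ∈ S}) (g : X k.1 → A k.1 × DetFun X A (S.erase k.1)),
        0 ≤ ∏ xk, Pfirst k xk (g xk).1 * r k xk (g xk).1 (g xk).2 :=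
      fun k g => Finset.prod_nonneg fun xk _ =>
        mul_nonneg ((hPfirst k xk).1 _) (hr0 k xk _ _)
    have hsumw : ∀ (k : {j // j ∈ S}),
        ∑ g : X k.1 → A k.1 × DetFun X A (S.erase k.1),
          ∏ xk, Pfirst k xk (g xk).1 * r k xk (g xk).1 (g xk).2 = 1 := by
      intro k
      rw [← Fintype.prod_sum
        (f := fun xk (p : A k.1 × DetFun X A (S.erase k.1)) => Pfirst k xk p.1 * r k xk p.1 p.2)]
      exact Finset.prod_eq_one fun xk _ => hw1 k xk
    refine ⟨fun α => ∑ k ∈ S.attach, qk k *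
        ∑ g : X k.1 → A k.1 × DetFun X A (S.erase k.1),
          (∏ xk, Pfirst k xk (g xk).1 * r k xk (g xk).1 (g xk).2) *
          (if α = insFun k g then (1:ℝ) else 0), ?_, ?_, ?_, ?_⟩
    · intro α
      exact Finset.sum_nonneg fun k _ => mul_nonneg (hqk k) (Finset.sum_nonneg fun g _ =>
        mul_nonneg (hwnn k g) (by split <;> norm_num))
    · rw [Finset.sum_comm]
      have hk1 : ∀ k ∈ S.attach, (∑ α : DetFun X A S, qk k *
          ∑ g : X k.1 → A k.1 × DetFun X A (S.erase k.1),
            (∏ xk, Pfirst k xk (g xk).1 * r k xk (g xk).1 (g xk).2) *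
            (if α = insFun k g then (1:ℝ) else 0)) = qk k := by
        intro k _
        rw [← Finset.mul_sum, Finset.sum_comm]
        have h2 : ∀ g : X k.1 → A k.1 × DetFun X A (S.erase k.1),
            (∑ α : DetFun X A S,
              (∏ xk, Pfirst k xk (g xk).1 * r k xk (g xk).1 (g xk).2) *
              (if α = insFun k g then (1:ℝ) else 0))
            = ∏ xk, Pfirst k xk (g xk).1 * r k xk (g xk).1 (g xk).2 := by
          intro g
          rw [← Finset.mul_sum, Finset.sum_ite_eq' Finset.univ (insFun k g) (fun _ => (1:ℝ))]
          simp
        rw [Finset.sum_congr rfl fun g _ => h2 g, hsumw k, mul_one]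
      rw [Finset.sum_congr rfl hk1, hqk1]
    · intro α hα
      obtain ⟨k, hkmem, hk⟩ := Finset.exists_ne_zero_of_sum_ne_zero hα
      obtain ⟨g, _, hg⟩ := Finset.exists_ne_zero_of_sum_ne_zero (right_ne_zero_of_mul hk)
      have hne : (if α = insFun k g then (1:ℝ) else 0) ≠ 0 := right_ne_zero_of_mul hg
      have hαg : α = insFun k g := by
        by_contra h; rw [if_neg h] at hne; exact hne rfl
      have hwne : (∏ xk, Pfirst k xk (g xk).1 * r k xk (g xk).1 (g xk).2) ≠ 0 :=
        left_ne_zero_of_mul hg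
      rw [hαg]
      refine detCausal hS k Pfirst Prest hPfirst hPrest g fun xk => ?_
      have hfac := Finset.prod_ne_zero_iff.mp hwne xk (Finset.mem_univ xk)
      exact hrC k xk (g xk).1 (g xk).2 (right_ne_zero_of_mul hfac)
    · intro x a
      rw [hPeq x a]
      symm
      simp_rw [Finset.sum_mul]
      rw [Finset.sum_comm]
      refine Finset.sum_congr rfl fun k _ => ?_
      have hcol : ∀ g : X k.1 → A k.1 × DetFun X A (S.erase k.1),
          (∑ α : DetFun X A S,
            ((∏ xk, Pfirst k xk (g xk).1 * r k xk (g xk).1 (g xk).2) *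
              (if α = insFun k g then (1:ℝ) else 0)) * (if a = α x then (1:ℝ) else 0))
          = (∏ xk, Pfirst k xk (g xk).1 * r k xk (g xk).1 (g xk).2) *
              (if a = insFun k g x then (1:ℝ) else 0) := by
        intro g
        rw [Finset.sum_eq_single (insFun k g)]
        · rw [if_pos rfl, mul_one]
        · intro β _ hβ; rw [if_neg hβ, mul_zero, zero_mul]
        · intro h; exact absurd (Finset.mem_univ _) h
      have hkey : (∑ α : DetFun X A S,
          (∑ g : X k.1 → A k.1 × DetFun X A (S.erase k.1),
            (∏ xk, Pfirst k xk (g xk).1 * r k xk (g xk).1 (g xk).2) *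
            (if α = insFun k g then (1:ℝ) else 0)) * (if a = α x then (1:ℝ) else 0))
          = Pfirst k (x k) (a k) *
            Prest k (x k) (a k) (restr (erase_sub S k.1) x) (restr (erase_sub S k.1) a) := by
        simp_rw [Finset.sum_mul]
        rw [Finset.sum_comm]
        rw [Finset.sum_congr rfl fun g _ => hcol g]
        simp_rw [aux_ins_apply_iff k _ x a]
        calc (∑ g : X k.1 → A k.1 × DetFun X A (S.erase k.1),
              (∏ xk, Pfirst k xk (g xk).1 * r k xk (g xk).1 (g xk).2) *
              ((if a k = (g (x k)).1 then (1:ℝ) else 0) *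
               (if restr (erase_sub S k.1) a = (g (x k)).2 (restr (erase_sub S k.1) x)
                then (1:ℝ) else 0)))
            = ∑ p : A k.1 × DetFun X A (S.erase k.1),
                (Pfirst k (x k) p.1 * r k (x k) p.1 p.2) *
                ((if a k = p.1 then (1:ℝ) else 0) *
                 (if restr (erase_sub S k.1) a = p.2 (restr (erase_sub S k.1) x)
                  then (1:ℝ) else 0)) := by
              exact aux_extract
                (fun xk (p : A k.1 × DetFun X A (S.erase k.1)) =>
                  Pfirst k xk p.1 * r k xk p.1 p.2) (hw1 k) (x k)
                (fun (p : A k.1 × DetFun X A (S.erase k.1)) =>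
                 (if a k = p.1 then (1:ℝ) else 0) *
                 (if restr (erase_sub S k.1) a = p.2 (restr (erase_sub S k.1) x)
                  then (1:ℝ) else 0))
          _ = ∑ ak, ∑ β : DetFun X A (S.erase k.1),
                (Pfirst k (x k) ak * r k (x k) ak β) *
                ((if a k = ak then (1:ℝ) else 0) *
                 (if restr (erase_sub S k.1) a = β (restr (erase_sub S k.1) x)
                  then (1:ℝ) else 0)) := Fintype.sum_prod_type _
          _ = ∑ ak, if a k = ak then
                (∑ β : DetFun X A (S.erase k.1), Pfirst k (x k) ak *
                  (r k (x k) ak β *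
                   (if restr (erase_sub S k.1) a = β (restr (erase_sub S k.1) x)
                    then (1:ℝ) else 0))) else 0 := by
              refine Finset.sum_congr rfl fun ak _ => ?_
              by_cases h : a k = ak
              · simp only [if_pos h, one_mul, mul_assoc]
              · simp only [if_neg h, zero_mul, mul_zero, Finset.sum_const_zero]
          _ = ∑ β : DetFun X A (S.erase k.1), Pfirst k (x k) (a k) *
                (r k (x k) (a k) β *
                 (if restr (erase_sub S k.1) a = β (restr (erase_sub S k.1) x)
                  then (1:ℝ) else 0)) := by
              rw [Finset.sum_ite_eq]; simp
          _ = Pfirst k (x k) (a k) *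
              ∑ β : DetFun X A (S.erase k.1), r k (x k) (a k) β *
                (if restr (erase_sub S k.1) a = β (restr (erase_sub S k.1) x)
                 then (1:ℝ) else 0) := (Finset.mul_sum _ _ _).symm
          _ = Pfirst k (x k) (a k) *
              Prest k (x k) (a k) (restr (erase_sub S k.1) x) (restr (erase_sub S k.1) a) := by
              rw [hrval k (x k) (a k) (restr (erase_sub S k.1) x) (restr (erase_sub S k.1) a)]
      calc (∑ α : DetFun X A S, (qk k *
            ∑ g : X k.1 → A k.1 × DetFun X A (S.erase k.1),
              (∏ xk, Pfirst k xk (g xk).1 * r k xk (g xk).1 (g xk).2) *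
              (if α = insFun k g then (1:ℝ) else 0)) * (if a = α x then (1:ℝ) else 0))
          = qk k * ∑ α : DetFun X A S,
            (∑ g : X k.1 → A k.1 × DetFun X A (S.erase k.1),
              (∏ xk, Pfirst k xk (g xk).1 * r k xk (g xk).1 (g xk).2) *
              (if α = insFun k g then (1:ℝ) else 0)) * (if a = α x then (1:ℝ) else 0) := by
            rw [Finset.mul_sum]
            exact Finset.sum_congr rfl fun α _ => by ring
        _ = qk k * (Pfirst k (x k) (a k) *
              Prest k (x k) (a k) (restr (erase_sub S k.1) x) (restr (erase_sub S k.1) a)) := by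
            rw [hkey]
        _ = qk k * Pfirst k (x k) (a k) *
              Prest k (x k) (a k) (restr (erase_sub S k.1) x) (restr (erase_sub S k.1) a) := by
            ring
end

section
/- If P' and P'' are two N-partite causal correlations for the same scenario (same input and output sets) and q', q'' ≥ 0 with q' + q'' = 1, then the correlation P defined by P(a|x) = q'·P'(a|x) + q''·P''(a|x) is also causal. In other words, the set of N-partite causal correlations for a fixed scenario is convex. -/
/-- Inversion: a causal correlation on at most one party is a probability distribution. -/
lemma isProbDist_of_isCausal_card_le_one {ι : Type} [DecidableEq ι]
    (X A : ι → Type) [∀ i, Fintype (A i)] (S : Finset ι) (P : Corr X A S)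
    (h : IsCausal X A S P) (hcard : S.card ≤ 1) : ∀ x, IsProbDist (P x) := by
  cases h with
  | base k P hP => exact hP
  | step S hS => omega

/-- the set of `N`-partite causal correlations for a fixed scenario is convex. -/

theorem convex_combination_of_causal_isCausal {ι : Type} [DecidableEq ι]
    (X A : ι → Type) [∀ i, Fintype (A i)] (S : Finset ι)
    (P' P'' : Corr X A S) (h' : IsCausal X A S P') (h'' : IsCausal X A S P'')
    (q' q'' : ℝ) (hq' : 0 ≤ q') (hq'' : 0 ≤ q'') (hsum : q' + q'' = 1) :
    IsCausal X A S (fun x a => q' * P' x a + q'' * P'' x a) := by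
  classical
  induction h' generalizing q' q'' with
  | base k P hP =>
    have hP2 : ∀ x, IsProbDist (P'' x) :=
      isProbDist_of_isCausal_card_le_one X A _ P'' h'' (by simp)
    refine IsCausal.base k _ (fun x => ⟨fun a =>
      add_nonneg (mul_nonneg hq' ((hP x).1 a)) (mul_nonneg hq'' ((hP2 x).1 a)), ?_⟩)
    rw [Finset.sum_add_distrib, ← Finset.mul_sum, ← Finset.mul_sum,
      (hP x).2, (hP2 x).2, mul_one, mul_one, hsum]
  | step S hS P q Pfirst Prest hq hq1 hPfirst hPrest hP IH =>
    cases h'' with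
    | base k2 P2 hP2 => simp at hS
    | step _ hS2 _ q2 Pfirst2 Prest2 hq2 hq21 hPfirst2 hPrest2 hP2 =>
      set Q : {j // j ∈ S} → ℝ := fun k => q' * q k + q'' * q2 k with hQdef
      have hQnn : ∀ k, 0 ≤ Q k := fun k =>
        add_nonneg (mul_nonneg hq' (hq k)) (mul_nonneg hq'' (hq2 k))
      set num : (k : {j // j ∈ S}) → X k.1 → A k.1 → ℝ := fun k xk ak =>
        q' * q k * Pfirst k xk ak + q'' * q2 k * Pfirst2 k xk ak with hnumdef
      have hAnn : ∀ k xk ak, 0 ≤ q' * q k * Pfirst k xk ak := fun k xk ak =>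
        mul_nonneg (mul_nonneg hq' (hq k)) ((hPfirst k xk).1 ak)
      have hBnn : ∀ k xk ak, 0 ≤ q'' * q2 k * Pfirst2 k xk ak := fun k xk ak =>
        mul_nonneg (mul_nonneg hq'' (hq2 k)) ((hPfirst2 k xk).1 ak)
      have hnumnn : ∀ k xk ak, 0 ≤ num k xk ak := fun k xk ak =>
        add_nonneg (hAnn k xk ak) (hBnn k xk ak)
      refine IsCausal.step S hS _ Q
        (fun k xk ak => if Q k = 0 then Pfirst k xk ak else num k xk ak / Q k)
        (fun k xk ak => if h : num k xk ak = 0 then Prest k xk ak else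
          fun u v => (q' * q k * Pfirst k xk ak / num k xk ak) * Prest k xk ak u v +
            (q'' * q2 k * Pfirst2 k xk ak / num k xk ak) * Prest2 k xk ak u v)
        hQnn ?_ ?_ ?_ ?_
      · -- weights sum to 1
        rw [hQdef, Finset.sum_add_distrib, ← Finset.mul_sum, ← Finset.mul_sum,
          hq1, hq21, mul_one, mul_one, hsum]
      · -- Pfirst is a prob dist
        intro k xk
        by_cases hQ0 : Q k = 0
        · simpa [hQ0] using hPfirst k xk
        · have hQpos : 0 < Q k := lt_of_le_of_ne (hQnn k) (Ne.symm hQ0)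
          constructor
          · intro ak
            simp only [hQ0, if_false]
            exact div_nonneg (hnumnn k xk ak) hQpos.le
          · simp only [hQ0, if_false]
            rw [← Finset.sum_div]
            have : ∑ ak, num k xk ak = Q k := by
              rw [hnumdef]
              simp only []
              rw [Finset.sum_add_distrib, ← Finset.mul_sum, ← Finset.mul_sum,
                (hPfirst k xk).2, (hPfirst2 k xk).2, mul_one, mul_one]
            rw [this]
            exact div_self hQ0
      · -- Prest is causal
        intro k xk ak
        by_cases h0 : num k xk ak = 0
        · simpa [h0] using hPrest k xk ak
        · have hpos : 0 < num k xk ak := lt_of_le_of_ne (hnumnn k xk ak) (Ne.symm h0)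
          refine cast (congrArg (IsCausal X A (S.erase k.1)) (dif_neg h0).symm) ?_
          refine IH k xk ak _ (hPrest2 k xk ak) _ _
            (div_nonneg (hAnn k xk ak) hpos.le) (div_nonneg (hBnn k xk ak) hpos.le) ?_
          rw [← add_div]
          exact div_self h0
      · -- the decomposition identity
        intro x a
        rw [hP x a, hP2 x a, Finset.mul_sum, Finset.mul_sum, ← Finset.sum_add_distrib]
        refine Finset.sum_congr rfl fun k _ => ?_
        have e1 : q' * (q k * Pfirst k (x k) (a k) *
              Prest k (x k) (a k) (restr (erase_sub S k.1) x) (restr (erase_sub S k.1) a))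
            = (q' * q k * Pfirst k (x k) (a k)) *
              Prest k (x k) (a k) (restr (erase_sub S k.1) x) (restr (erase_sub S k.1) a) := by
          ring
        have e2 : q'' * (q2 k * Pfirst2 k (x k) (a k) *
              Prest2 k (x k) (a k) (restr (erase_sub S k.1) x) (restr (erase_sub S k.1) a))
            = (q'' * q2 k * Pfirst2 k (x k) (a k)) *
              Prest2 k (x k) (a k) (restr (erase_sub S k.1) x) (restr (erase_sub S k.1) a) := by
          ring
        rw [e1, e2]
        by_cases h0 : num k (x k) (a k) = 0
        · have h0' : q' * q k * Pfirst k (x k) (a k)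
              + q'' * q2 k * Pfirst2 k (x k) (a k) = 0 := h0
          have hA : q' * q k * Pfirst k (x k) (a k) = 0 := by
            linarith [hAnn k (x k) (a k), hBnn k (x k) (a k)]
          have hB : q'' * q2 k * Pfirst2 k (x k) (a k) = 0 := by
            linarith [hAnn k (x k) (a k), hBnn k (x k) (a k)]
          rw [hA, hB, zero_mul, zero_mul, add_zero]
          by_cases hQ0 : Q k = 0
          · simp [hQ0]
          · simp only [if_neg hQ0, dif_pos h0, h0, zero_div, mul_zero, zero_mul]
        · have hQ0 : Q k ≠ 0 := by
            intro hQ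
            have hQ' : q' * q k + q'' * q2 k = 0 := hQ
            have h1 : q' * q k = 0 := by
              linarith [mul_nonneg hq' (hq k), mul_nonneg hq'' (hq2 k)]
            have h2 : q'' * q2 k = 0 := by
              linarith [mul_nonneg hq' (hq k), mul_nonneg hq'' (hq2 k)]
            refine h0 ?_
            show q' * q k * Pfirst k (x k) (a k) + q'' * q2 k * Pfirst2 k (x k) (a k) = 0
            rw [h1, h2, zero_mul, zero_mul, add_zero]
          simp only [if_neg hQ0, dif_neg h0]
          erw [dif_neg h0]
          have hnum' : num k (x k) (a k) = q' * q k * Pfirst k (x k) (a k)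
              + q'' * q2 k * Pfirst2 k (x k) (a k) := rfl
          field_simp
end

section
/- Let P be an N-partite causal correlation and let K be a nonempty strict subset of {1,…,N}. Then for every fixed assignment x_{N∖K} of inputs to the parties outside K, the |K|-partite correlation P_{x_{N∖K}} defined by P_{x_{N∖K}}(a_K | x_K) := Σ_{a_{N∖K}} P(a|x) (the marginal over the outputs of the parties outside K, with their inputs fixed to x_{N∖K}) is causal. -/
section Aux

variable {ι : Type} [DecidableEq ι] {X : ι → Type}

theorem restrEquiv_aux {S T : Finset ι} (h1 : T ⊆ S) (h2 : S ⊆ T)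
    (x : (i : {j // j ∈ S}) → X i.1) : restr h2 (restr h1 x) = x := rfl

/-- Reindexing equivalence between tuples over two finsets with mutual inclusions. -/
def restrEquiv {S T : Finset ι} (h1 : T ⊆ S) (h2 : S ⊆ T) :
    ((i : {j // j ∈ S}) → X i.1) ≃ ((i : {j // j ∈ T}) → X i.1) where
  toFun := restr h1
  invFun := restr h2
  left_inv := fun _ => rfl
  right_inv := fun _ => rfl

theorem glue_pos {S K : Finset ι} (h : K ⊆ S) (u : (i : {j // j ∈ K}) → X i.1)
    (v : (i : {j // j ∈ S \ K}) → X i.1) (i : {j // j ∈ S}) (hi : i.1 ∈ K) :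
    glue h u v i = u ⟨i.1, hi⟩ := dif_pos hi

theorem glue_neg {S K : Finset ι} (h : K ⊆ S) (u : (i : {j // j ∈ K}) → X i.1)
    (v : (i : {j // j ∈ S \ K}) → X i.1) (i : {j // j ∈ S}) (hi : i.1 ∉ K) :
    glue h u v i = v ⟨i.1, Finset.mem_sdiff.mpr ⟨i.2, hi⟩⟩ := dif_neg hi

theorem restr_glue {S K : Finset ι} (h : K ⊆ S) (u : (i : {j // j ∈ K}) → X i.1)
    (v : (i : {j // j ∈ S \ K}) → X i.1) :
    restr h (glue h u v) = u := by
  funext i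
  exact dif_pos i.2

theorem restr_glue' {S K : Finset ι} (h : K ⊆ S) (u : (i : {j // j ∈ K}) → X i.1)
    (v : (i : {j // j ∈ S \ K}) → X i.1) :
    restr (sdiff_sub S K) (glue h u v) = v := by
  funext i
  exact dif_neg (Finset.mem_sdiff.mp i.2).2

theorem glue_restr {S K : Finset ι} (h : K ⊆ S) (x : (i : {j // j ∈ S}) → X i.1) :
    glue h (restr h x) (restr (sdiff_sub S K) x) = x := by
  funext i
  by_cases hi : i.1 ∈ K
  · exact dif_pos hi
  · exact dif_neg hi

/-- Splitting a tuple over `S` into tuples over `K` and `S \ K`. -/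
def glueEquiv {S K : Finset ι} (h : K ⊆ S) :
    (((i : {j // j ∈ K}) → X i.1) × ((i : {j // j ∈ S \ K}) → X i.1)) ≃
      ((i : {j // j ∈ S}) → X i.1) where
  toFun p := glue h p.1 p.2
  invFun x := (restr h x, restr (sdiff_sub S K) x)
  left_inv p := by
    ext1
    · exact restr_glue h p.1 p.2
    · exact restr_glue' h p.1 p.2
  right_inv x := glue_restr h x

theorem ins_self {S : Finset ι} {k : ι} (hk : k ∈ S) (xk : X k)
    (u : (i : {j // j ∈ S.erase k}) → X i.1) (h2 : k ∈ S) :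
    ins hk xk u ⟨k, h2⟩ = xk := by
  simp [ins]

theorem restr_ins {S : Finset ι} {k : ι} (hk : k ∈ S) (xk : X k)
    (u : (i : {j // j ∈ S.erase k}) → X i.1) :
    restr (erase_sub S k) (ins hk xk u) = u := by
  funext i
  have : i.1 ≠ k := (Finset.mem_erase.mp i.2).1
  simp only [restr, ins, dif_neg this]

theorem ins_restr {S : Finset ι} {k : ι} (hk : k ∈ S)
    (x : (i : {j // j ∈ S}) → X i.1) :
    ins hk (x ⟨k, hk⟩) (restr (erase_sub S k) x) = x := by
  funext i
  obtain ⟨i1, hi⟩ := i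
  by_cases h : i1 = k
  · subst h
    simp [ins]
  · simp only [ins, dif_neg h]
    rfl

/-- Splitting a tuple over `S` into the value at `k` and a tuple over `S.erase k`. -/
def insEquiv {S : Finset ι} {k : ι} (hk : k ∈ S) :
    (X k × ((i : {j // j ∈ S.erase k}) → X i.1)) ≃ ((i : {j // j ∈ S}) → X i.1) where
  toFun p := ins hk p.1 p.2
  invFun x := (x ⟨k, hk⟩, restr (erase_sub S k) x)
  left_inv p := by
    ext1
    · exact ins_self hk p.1 p.2 hk
    · exact restr_ins hk p.1 p.2
  right_inv x := ins_restr hk x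

end Aux
section Sums

variable {ι : Type} [DecidableEq ι] {A : ι → Type} [∀ i, Fintype (A i)]

theorem sum_glue {S K : Finset ι} (h : K ⊆ S) (f : ((i : {j // j ∈ S}) → A i.1) → ℝ) :
    ∑ a : (i : {j // j ∈ S}) → A i.1, f a =
      ∑ u : (i : {j // j ∈ K}) → A i.1, ∑ v : (i : {j // j ∈ S \ K}) → A i.1,
        f (glue h u v) := by
  rw [← Equiv.sum_comp (glueEquiv h) f, Fintype.sum_prod_type]
  rfl

theorem sum_ins {S : Finset ι} {k : ι} (hk : k ∈ S)
    (f : ((i : {j // j ∈ S}) → A i.1) → ℝ) :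
    ∑ a : (i : {j // j ∈ S}) → A i.1, f a =
      ∑ ak : A k, ∑ u : (i : {j // j ∈ S.erase k}) → A i.1, f (ins hk ak u) := by
  rw [← Equiv.sum_comp (insEquiv hk) f, Fintype.sum_prod_type]
  rfl

theorem sum_restrEquiv {S T : Finset ι} (h1 : T ⊆ S) (h2 : S ⊆ T)
    (f : ((i : {j // j ∈ T}) → A i.1) → ℝ) :
    ∑ v : (i : {j // j ∈ S}) → A i.1, f (restr h1 v) =
      ∑ w : (i : {j // j ∈ T}) → A i.1, f w :=
  Equiv.sum_comp (restrEquiv h1 h2) f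

end Sums

section Norm

variable {ι : Type} [DecidableEq ι] {X A : ι → Type} [∀ i, Fintype (A i)]

theorem isCausal_probDist {S : Finset ι} {P : Corr X A S}
    (hP : IsCausal X A S P) : ∀ x, IsProbDist (P x) := by
  induction hP with
  | base k P hPd => exact hPd
  | step S hS2 P q Pfirst Prest hq hq1 hPfirst hPrest hPeq ih =>
    intro x
    constructor
    · intro a
      rw [hPeq]
      apply Finset.sum_nonneg
      intro k _
      exact mul_nonneg (mul_nonneg (hq k) ((hPfirst k (x k)).1 (a k)))
        ((ih k (x k) (a k) (restr (erase_sub S k.1) x)).1 _)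
    · calc ∑ a, P x a
          = ∑ a : (i : {j // j ∈ S}) → A i.1, ∑ k ∈ S.attach,
              q k * Pfirst k (x k) (a k) *
              Prest k (x k) (a k) (restr (erase_sub S k.1) x) (restr (erase_sub S k.1) a) := by
            exact Finset.sum_congr rfl fun a _ => hPeq x a
        _ = ∑ k ∈ S.attach, ∑ a : (i : {j // j ∈ S}) → A i.1,
              q k * Pfirst k (x k) (a k) *
              Prest k (x k) (a k) (restr (erase_sub S k.1) x) (restr (erase_sub S k.1) a) :=
            Finset.sum_comm
        _ = ∑ k ∈ S.attach, q k := by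
            apply Finset.sum_congr rfl
            intro k _
            rw [sum_ins k.2 (fun a => q k * Pfirst k (x k) (a k) *
              Prest k (x k) (a k) (restr (erase_sub S k.1) x) (restr (erase_sub S k.1) a))]
            have hins : ∀ (ak : A k.1) (u : (i : {j // j ∈ S.erase k.1}) → A i.1),
                (ins k.2 ak u) k = ak := fun ak u => ins_self k.2 ak u k.2
            calc ∑ ak : A k.1, ∑ u : (i : {j // j ∈ S.erase k.1}) → A i.1,
                  q k * Pfirst k (x k) ((ins k.2 ak u) k) *
                  Prest k (x k) ((ins k.2 ak u) k) (restr (erase_sub S k.1) x)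
                    (restr (erase_sub S k.1) (ins k.2 ak u))
                = ∑ ak : A k.1, q k * Pfirst k (x k) ak := by
                  apply Finset.sum_congr rfl
                  intro ak _
                  have : ∀ u : (i : {j // j ∈ S.erase k.1}) → A i.1,
                      q k * Pfirst k (x k) ((ins k.2 ak u) k) *
                      Prest k (x k) ((ins k.2 ak u) k) (restr (erase_sub S k.1) x)
                        (restr (erase_sub S k.1) (ins k.2 ak u))
                      = q k * Pfirst k (x k) ak *
                        Prest k (x k) ak (restr (erase_sub S k.1) x) u := by
                    intro u
                    rw [hins ak u, restr_ins]
                  rw [Finset.sum_congr rfl fun u _ => this u, ← Finset.mul_sum,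
                    (ih k (x k) ak (restr (erase_sub S k.1) x)).2, mul_one]
              _ = q k := by
                  rw [← Finset.mul_sum, (hPfirst k (x k)).2, mul_one]
        _ = 1 := hq1

end Norm
section Convex

variable {ι : Type} [DecidableEq ι] {X A : ι → Type} [∀ i, Fintype (A i)]

theorem isCausal_step_inv {S : Finset ι} {P : Corr X A S}
    (hP : IsCausal X A S P) (hS2 : 2 ≤ S.card) :
    ∃ (q : {j // j ∈ S} → ℝ)
      (Pfirst : (k : {j // j ∈ S}) → X k.1 → A k.1 → ℝ)
      (Prest : (k : {j // j ∈ S}) → X k.1 → A k.1 → Corr X A (S.erase k.1)),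
      (∀ k, 0 ≤ q k) ∧ (∑ k ∈ S.attach, q k = 1) ∧
      (∀ k xk, IsProbDist (Pfirst k xk)) ∧
      (∀ k xk ak, IsCausal X A (S.erase k.1) (Prest k xk ak)) ∧
      (∀ x a, P x a = ∑ k ∈ S.attach, q k * Pfirst k (x k) (a k) *
        Prest k (x k) (a k) (restr (erase_sub S k.1) x) (restr (erase_sub S k.1) a)) := by
  cases hP with
  | base k P hPd => simp at hS2
  | step S hS P q Pfirst Prest hq hq1 hPfirst hPrest hPeq =>
    exact ⟨q, Pfirst, Prest, hq, hq1, hPfirst, hPrest, hPeq⟩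

theorem convex_isCausal :
    ∀ (n : ℕ) (K : Finset ι), K.card ≤ n →
    ∀ (J : Type) [Fintype J] (lam : J → ℝ) (Q : J → Corr X A K),
    (∀ j, 0 ≤ lam j) → (∑ j, lam j = 1) → (∀ j, IsCausal X A K (Q j)) →
    IsCausal X A K (fun x a => ∑ j, lam j * Q j x a) := by
  intro n
  induction n with
  | zero =>
    intro K hKn J _ lam Q hlam hlam1 hQ
    exfalso
    have hJ : Nonempty J := by
      by_contra h
      rw [not_nonempty_iff] at h
      rw [Finset.sum_eq_zero (fun j _ => (h.false j).elim)] at hlam1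
      norm_num at hlam1
    obtain ⟨j0⟩ := hJ
    cases hQ j0 with
    | base k P hPd =>
      simp at hKn
    | step K hS2 P q Pfirst Prest hq hq1 hPfirst hPrest hPeq =>
      omega
  | succ n ih =>
    intro K hKn J _ lam Q hlam hlam1 hQ
    have hJ : Nonempty J := by
      by_contra h
      rw [not_nonempty_iff] at h
      rw [Finset.sum_eq_zero (fun j _ => (h.false j).elim)] at hlam1
      norm_num at hlam1
    obtain ⟨j0⟩ := hJ
    cases hQ j0 with
    | base k P0 hPd =>
      -- now K = {k}
      apply IsCausal.base k
      intro x
      constructor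
      · intro a
        exact Finset.sum_nonneg fun j _ =>
          mul_nonneg (hlam j) ((isCausal_probDist (hQ j) x).1 a)
      · rw [Finset.sum_comm]
        calc ∑ j : J, ∑ a, lam j * Q j x a
            = ∑ j : J, lam j := by
              apply Finset.sum_congr rfl
              intro j _
              rw [← Finset.mul_sum, (isCausal_probDist (hQ j) x).2, mul_one]
          _ = 1 := hlam1
    | step K hS2 P0 q0 Pf0 Pr0 hq0 hq01 hPf0 hPr0 hPeq0 =>
      clear hq0 hq01 hPf0 hPr0 hPeq0
      choose q F R hq hq1 hF hR hPeq using fun j => isCausal_step_inv (hQ j) hS2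
      set q' : {j // j ∈ K} → ℝ := fun k => ∑ j : J, lam j * q j k with hq'def
      set num : (k : {j // j ∈ K}) → X k.1 → A k.1 → ℝ :=
        fun k xk ak => ∑ j : J, lam j * q j k * F j k xk ak with hnumdef
      have hq'nonneg : ∀ k, 0 ≤ q' k := fun k =>
        Finset.sum_nonneg fun j _ => mul_nonneg (hlam j) (hq j k)
      have hnumnonneg : ∀ k xk ak, 0 ≤ num k xk ak := fun k xk ak =>
        Finset.sum_nonneg fun j _ =>
          mul_nonneg (mul_nonneg (hlam j) (hq j k)) ((hF j k xk).1 ak)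
      set Pfirst' : (k : {j // j ∈ K}) → X k.1 → A k.1 → ℝ :=
        fun k xk ak => if q' k = 0 then F j0 k xk ak else num k xk ak / q' k with hPf'def
      set Prest' : (k : {j // j ∈ K}) → X k.1 → A k.1 → Corr X A (K.erase k.1) :=
        fun k xk ak => if num k xk ak = 0 then R j0 k xk ak else
          fun y c => ∑ j : J, (lam j * q j k * F j k xk ak / num k xk ak) * R j k xk ak y c
        with hPr'def
      -- zero sum lemmas
      have hzq : ∀ k, q' k = 0 → ∀ j : J, lam j * q j k = 0 := by
        intro k hk j
        have := (Finset.sum_eq_zero_iff_of_nonneg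
          (fun j _ => mul_nonneg (hlam j) (hq j k))).mp hk
        exact this j (Finset.mem_univ j)
      have hznum : ∀ k xk ak, num k xk ak = 0 → ∀ j : J, lam j * q j k * F j k xk ak = 0 := by
        intro k xk ak hk j
        have := (Finset.sum_eq_zero_iff_of_nonneg
          (fun j _ => mul_nonneg (mul_nonneg (hlam j) (hq j k)) ((hF j k xk).1 ak))).mp hk
        exact this j (Finset.mem_univ j)
      have hq'num : ∀ k xk ak, q' k = 0 → num k xk ak = 0 := by
        intro k xk ak hk
        exact Finset.sum_eq_zero fun j _ => by rw [hzq k hk j, zero_mul]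
      apply IsCausal.step K hS2 _ q' Pfirst' Prest' hq'nonneg
      · -- sum of q' = 1
        rw [hq'def]
        rw [Finset.sum_comm]
        calc ∑ j : J, ∑ k ∈ K.attach, lam j * q j k
            = ∑ j : J, lam j := by
              apply Finset.sum_congr rfl
              intro j _
              rw [← Finset.mul_sum, hq1 j, mul_one]
          _ = 1 := hlam1
      · -- Pfirst' prob dists
        intro k xk
        by_cases hz : q' k = 0
        · simp only [hPf'def, if_pos hz]
          exact hF j0 k xk
        · simp only [hPf'def, if_neg hz]
          constructor
          · intro ak
            exact div_nonneg (hnumnonneg k xk ak) (hq'nonneg k)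
          · rw [← Finset.sum_div]
            have : ∑ ak, num k xk ak = q' k := by
              rw [hnumdef, Finset.sum_comm]
              apply Finset.sum_congr rfl
              intro j _
              rw [← Finset.mul_sum, (hF j k xk).2, mul_one]
            rw [this, div_self hz]
      · -- Prest' causal
        intro k xk ak
        by_cases hz : num k xk ak = 0
        · simp only [hPr'def, if_pos hz]
          refine (congrArg (IsCausal X A (K.erase k.1)) (if_pos hz)).mpr ?_
          exact hR j0 k xk ak
        · simp only [hPr'def, if_neg hz]
          refine (congrArg (IsCausal X A (K.erase k.1)) (if_neg hz)).mpr ?_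
          apply ih (K.erase k.1) (by
            have := Finset.card_erase_of_mem k.2
            omega)
          · intro j
            exact div_nonneg (mul_nonneg (mul_nonneg (hlam j) (hq j k)) ((hF j k xk).1 ak))
              (hnumnonneg k xk ak)
          · rw [← Finset.sum_div]
            exact div_self hz
          · intro j
            exact hR j k xk ak
      · -- the decomposition identity
        intro x a
        calc ∑ j : J, lam j * Q j x a
            = ∑ j : J, ∑ k ∈ K.attach, lam j * (q j k * F j k (x k) (a k) *
                R j k (x k) (a k) (restr (erase_sub K k.1) x) (restr (erase_sub K k.1) a)) := by
              apply Finset.sum_congr rfl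
              intro j _
              rw [hPeq j x a, Finset.mul_sum]
          _ = ∑ k ∈ K.attach, ∑ j : J, lam j * (q j k * F j k (x k) (a k) *
                R j k (x k) (a k) (restr (erase_sub K k.1) x) (restr (erase_sub K k.1) a)) :=
              Finset.sum_comm
          _ = ∑ k ∈ K.attach, q' k * Pfirst' k (x k) (a k) *
                Prest' k (x k) (a k) (restr (erase_sub K k.1) x) (restr (erase_sub K k.1) a) := by
              apply Finset.sum_congr rfl
              intro k _
              set xk := x k
              set ak := a k
              set y := restr (erase_sub K k.1) x
              set c := restr (erase_sub K k.1) a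
              by_cases hz : num k xk ak = 0
              · have h0 : ∀ j : J, lam j * (q j k * F j k xk ak * R j k xk ak y c) = 0 := by
                  intro j
                  have := hznum k xk ak hz j
                  calc lam j * (q j k * F j k xk ak * R j k xk ak y c)
                      = (lam j * q j k * F j k xk ak) * R j k xk ak y c := by ring
                    _ = 0 := by rw [this, zero_mul]
                rw [Finset.sum_eq_zero fun j _ => h0 j]
                by_cases hzq' : q' k = 0
                · rw [hzq', zero_mul, zero_mul]
                · simp only [hPf'def, if_neg hzq', hz, zero_div, mul_zero, zero_mul]
              · have hq'ne : q' k ≠ 0 := fun h => hz (hq'num k xk ak h)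
                simp only [hPf'def, hPr'def, if_neg hz, if_neg hq'ne]
                refine Eq.trans ?_ (congrArg (fun s : Corr X A (K.erase k.1) =>
                  q' k * (num k xk ak / q' k) * s y c) (if_neg hz)).symm
                beta_reduce
                have h1 : q' k * (num k xk ak / q' k) = num k xk ak := by
                  field_simp
                rw [h1, Finset.mul_sum]
                apply Finset.sum_congr rfl
                intro j _
                field_simp

end Convex
section Subsets

variable {ι : Type} [DecidableEq ι]

theorem sdiff_erase_sub {S K : Finset ι} (hKS : K ⊆ S) {k : ι} (hk : k ∈ K) :
    (S.erase k) \ (K.erase k) ⊆ S \ K := by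
  intro i hi
  simp only [Finset.mem_sdiff, Finset.mem_erase] at hi ⊢
  tauto

theorem sdiff_erase_sub' {S K : Finset ι} (hKS : K ⊆ S) {k : ι} (hk : k ∈ K) :
    S \ K ⊆ (S.erase k) \ (K.erase k) := by
  intro i hi
  simp only [Finset.mem_sdiff, Finset.mem_erase] at hi ⊢
  exact ⟨⟨fun e => hi.2 (e ▸ hk), hi.1⟩, fun h => hi.2 h.2⟩

theorem erase_sdiff_sub (S K : Finset ι) (k : ι) : (S.erase k) \ K ⊆ S \ K := by
  intro i hi
  simp only [Finset.mem_sdiff, Finset.mem_erase] at hi ⊢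
  tauto

theorem erase_sdiff_sub3 (S K : Finset ι) (k : ι) : (S.erase k) \ K ⊆ (S \ K).erase k := by
  intro i hi
  simp only [Finset.mem_sdiff, Finset.mem_erase] at hi ⊢
  tauto

theorem erase_sdiff_sub4 (S K : Finset ι) (k : ι) : (S \ K).erase k ⊆ (S.erase k) \ K := by
  intro i hi
  simp only [Finset.mem_sdiff, Finset.mem_erase] at hi ⊢
  tauto

theorem sub_erase_of_not_mem {S K : Finset ι} (hKS : K ⊆ S) {k : ι} (hk : k ∉ K) :
    K ⊆ S.erase k :=
  fun i hi => Finset.mem_erase.mpr ⟨fun e => hk (e ▸ hi), hKS hi⟩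

variable {X : ι → Type}

theorem restr_glue_mem {S K : Finset ι} (hKS : K ⊆ S) {k : ι} (hk : k ∈ K)
    (u : (i : {j // j ∈ K}) → X i.1) (w : (i : {j // j ∈ S \ K}) → X i.1) :
    restr (erase_sub S k) (glue hKS u w) =
      glue (Finset.erase_subset_erase k hKS) (restr (erase_sub K k) u)
        (restr (sdiff_erase_sub hKS hk) w) := by
  funext i
  have hik : i.1 ≠ k := (Finset.mem_erase.mp i.2).1
  by_cases hi : i.1 ∈ K
  · have h2 : i.1 ∈ K.erase k := Finset.mem_erase.mpr ⟨hik, hi⟩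
    simp only [restr, glue, dif_pos hi, dif_pos h2]
  · have h2 : i.1 ∉ K.erase k := fun h => hi (Finset.mem_of_mem_erase h)
    simp only [restr, glue, dif_neg hi, dif_neg h2]

theorem restr_glue_not_mem {S K : Finset ι} (hKS : K ⊆ S) {k : ι} (hk : k ∉ K)
    (u : (i : {j // j ∈ K}) → X i.1) (w : (i : {j // j ∈ S \ K}) → X i.1) :
    restr (erase_sub S k) (glue hKS u w) =
      glue (sub_erase_of_not_mem hKS hk) u (restr (erase_sdiff_sub S K k) w) := by
  funext i
  by_cases hi : i.1 ∈ K
  · simp only [restr, glue, dif_pos hi]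
  · simp only [restr, glue, dif_neg hi]

theorem restr_ins_not_mem {S T : Finset ι} {k : ι} (hk : k ∈ S) (hTS : T ⊆ S) (hkT : k ∉ T)
    (ak : X k) (v' : (i : {j // j ∈ S.erase k}) → X i.1) :
    restr hTS (ins hk ak v') = restr (sub_erase_of_not_mem hTS hkT) v' := by
  funext i
  have : i.1 ≠ k := fun e => hkT (e ▸ i.2)
  simp only [restr, ins, dif_neg this]

end Subsets

section Main

variable {ι : Type} [DecidableEq ι]

theorem marginal_aux (X A : ι → Type) [∀ i, Fintype (A i)] :
    ∀ (n : ℕ) (S : Finset ι), S.card ≤ n → ∀ (P : Corr X A S), IsCausal X A S P →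
    ∀ (K : Finset ι), K.Nonempty → ∀ (hKS : K ⊆ S),
    ∀ (xout : (i : {j // j ∈ S \ K}) → X i.1),
    IsCausal X A K (fun u b => ∑ v : (i : {j // j ∈ S \ K}) → A i.1,
      P (glue hKS u xout) (glue hKS b v)) := by
  intro n
  induction n with
  | zero =>
    intro S hSn P hP K hK hKS xout
    exfalso
    have h1 := Finset.card_le_card hKS
    have h2 := Finset.card_pos.mpr hK
    omega
  | succ n ih =>
    intro S hSn P hP K hK hKS xout
    by_cases hSK : S ⊆ K
    · -- K = S : the marginal is P itself
      have hKSeq : K = S := Finset.Subset.antisymm hKS hSK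
      subst hKSeq
      haveI : IsEmpty {j // j ∈ K \ K} := ⟨fun i => absurd i.2 (by simp)⟩
      have hge : ∀ (Y : ι → Type) (u : (i : {j // j ∈ K}) → Y i.1)
          (w : (i : {j // j ∈ K \ K}) → Y i.1), glue hKS u w = u := by
        intro Y u w
        funext i
        exact dif_pos i.2
      have heq : (fun (u : (i : {j // j ∈ K}) → X i.1) (b : (i : {j // j ∈ K}) → A i.1) =>
          ∑ v : (i : {j // j ∈ K \ K}) → A i.1,
            P (glue hKS u xout) (glue hKS b v)) = P := by
        funext u b
        have h1 : ∀ v : (i : {j // j ∈ K \ K}) → A i.1,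
            P (glue hKS u xout) (glue hKS b v) = P u b := by
          intro v
          rw [hge X u xout, hge A b v]
        rw [Finset.sum_congr rfl fun v _ => h1 v, Finset.sum_const, Finset.card_univ,
          Fintype.card_unique, one_smul]
      rw [heq]
      exact hP
    · have hK1 : 1 ≤ K.card := Finset.card_pos.mpr hK
      by_cases hKone : K.card = 1
      · -- K is a singleton: use the base constructor
        obtain ⟨m, hm⟩ := Finset.card_eq_one.mp hKone
        subst hm
        apply IsCausal.base m
        intro u
        constructor
        · intro b
          exact Finset.sum_nonneg fun v _ => (isCausal_probDist hP _).1 _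
        · calc ∑ b, ∑ v : (i : {j // j ∈ S \ {m}}) → A i.1,
                P (glue hKS u xout) (glue hKS b v)
              = ∑ a, P (glue hKS u xout) a := (sum_glue hKS _).symm
            _ = 1 := (isCausal_probDist hP _).2
      · -- 2 ≤ K.card
        have hK2 : 2 ≤ K.card := by omega
        have hS2 : 2 ≤ S.card := le_trans hK2 (Finset.card_le_card hKS)
        obtain ⟨q, F, R, hq, hq1, hF, hR, hPeq⟩ := isCausal_step_inv hP hS2
        have hcard : ∀ k : ι, k ∈ S → (S.erase k).card ≤ n := by
          intro k hk
          rw [Finset.card_erase_of_mem hk]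
          omega
        -- the correlations C k on K such that the marginal is ∑ₖ q k • C k
        set C : {j // j ∈ S} → Corr X A K := fun k =>
          if hk : k.1 ∈ K then
            fun u b => F k (u ⟨k.1, hk⟩) (b ⟨k.1, hk⟩) *
              ∑ v2 : (i : {j // j ∈ (S.erase k.1) \ (K.erase k.1)}) → A i.1,
                R k (u ⟨k.1, hk⟩) (b ⟨k.1, hk⟩)
                  (glue (Finset.erase_subset_erase k.1 hKS) (restr (erase_sub K k.1) u)
                    (restr (sdiff_erase_sub hKS hk) xout))
                  (glue (Finset.erase_subset_erase k.1 hKS) (restr (erase_sub K k.1) b) v2)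
          else
            fun u b => ∑ ak : A k.1,
              F k (xout ⟨k.1, Finset.mem_sdiff.mpr ⟨k.2, hk⟩⟩) ak *
              ∑ v2 : (i : {j // j ∈ (S.erase k.1) \ K}) → A i.1,
                R k (xout ⟨k.1, Finset.mem_sdiff.mpr ⟨k.2, hk⟩⟩) ak
                  (glue (sub_erase_of_not_mem hKS hk) u (restr (erase_sdiff_sub S K k.1) xout))
                  (glue (sub_erase_of_not_mem hKS hk) b v2)
          with hCdef
        -- each C k is causal
        have hCcaus : ∀ k : {j // j ∈ S}, IsCausal X A K (C k) := by
          intro k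
          by_cases hk : k.1 ∈ K
          · simp only [hCdef, dif_pos hk]
            refine (congrArg (IsCausal X A K) (dif_pos hk)).mpr ?_
            apply IsCausal.step K hK2 _ (fun k' => if k'.1 = k.1 then (1:ℝ) else 0)
              (fun k' => F ⟨k'.1, hKS k'.2⟩)
              (fun k' xk ak => fun y c =>
                ∑ v2 : (i : {j // j ∈ (S.erase k'.1) \ (K.erase k'.1)}) → A i.1,
                  R ⟨k'.1, hKS k'.2⟩ xk ak
                    (glue (Finset.erase_subset_erase k'.1 hKS) y
                      (restr (sdiff_erase_sub hKS k'.2) xout))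
                    (glue (Finset.erase_subset_erase k'.1 hKS) c v2))
            · intro k'
              by_cases h : k'.1 = k.1 <;> simp [h]
            · rw [Finset.sum_eq_single_of_mem ⟨k.1, hk⟩ (Finset.mem_attach K _)]
              · simp
              · intro b _ hb
                have : b.1 ≠ k.1 := fun h => hb (Subtype.ext h)
                simp [this]
            · intro k' xk
              exact hF ⟨k'.1, hKS k'.2⟩ xk
            · intro k' xk ak
              have hKe : (K.erase k'.1).Nonempty := by
                apply Finset.card_pos.mp
                rw [Finset.card_erase_of_mem k'.2]
                omega
              exact ih (S.erase k'.1) (hcard k'.1 (hKS k'.2)) _ (hR ⟨k'.1, hKS k'.2⟩ xk ak)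
                (K.erase k'.1) hKe (Finset.erase_subset_erase k'.1 hKS)
                (restr (sdiff_erase_sub hKS k'.2) xout)
            · intro u b
              rw [Finset.sum_eq_single_of_mem ⟨k.1, hk⟩ (Finset.mem_attach K _)]
              · rw [if_pos rfl, one_mul]
              · intro b' _ hb
                have : b'.1 ≠ k.1 := fun h => hb (Subtype.ext h)
                simp [this]
          · simp only [hCdef, dif_neg hk]
            refine (congrArg (IsCausal X A K) (dif_neg hk)).mpr ?_
            apply convex_isCausal K.card K le_rfl (A k.1)
              (F k (xout ⟨k.1, Finset.mem_sdiff.mpr ⟨k.2, hk⟩⟩))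
              (fun ak => fun u b =>
                ∑ v2 : (i : {j // j ∈ (S.erase k.1) \ K}) → A i.1,
                  R k (xout ⟨k.1, Finset.mem_sdiff.mpr ⟨k.2, hk⟩⟩) ak
                    (glue (sub_erase_of_not_mem hKS hk) u
                      (restr (erase_sdiff_sub S K k.1) xout))
                    (glue (sub_erase_of_not_mem hKS hk) b v2))
              (hF k _).1 (hF k _).2
            intro ak
            exact ih (S.erase k.1) (hcard k.1 k.2) _ (hR k _ ak) K hK
              (sub_erase_of_not_mem hKS hk) (restr (erase_sdiff_sub S K k.1) xout)
        -- the marginal equals the convex combination of the C k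
        have hident : ∀ u b,
            (∑ v : (i : {j // j ∈ S \ K}) → A i.1,
              P (glue hKS u xout) (glue hKS b v)) = ∑ k ∈ S.attach, q k * C k u b := by
          intro u b
          calc ∑ v : (i : {j // j ∈ S \ K}) → A i.1, P (glue hKS u xout) (glue hKS b v)
              = ∑ v : (i : {j // j ∈ S \ K}) → A i.1, ∑ k ∈ S.attach,
                  q k * F k ((glue hKS u xout) k) ((glue hKS b v) k) *
                  R k ((glue hKS u xout) k) ((glue hKS b v) k)
                    (restr (erase_sub S k.1) (glue hKS u xout))
                    (restr (erase_sub S k.1) (glue hKS b v)) :=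
                Finset.sum_congr rfl fun v _ => hPeq _ _
            _ = ∑ k ∈ S.attach, ∑ v : (i : {j // j ∈ S \ K}) → A i.1,
                  q k * F k ((glue hKS u xout) k) ((glue hKS b v) k) *
                  R k ((glue hKS u xout) k) ((glue hKS b v) k)
                    (restr (erase_sub S k.1) (glue hKS u xout))
                    (restr (erase_sub S k.1) (glue hKS b v)) := Finset.sum_comm
            _ = ∑ k ∈ S.attach, q k * C k u b := by
                apply Finset.sum_congr rfl
                intro k _
                by_cases hk : k.1 ∈ K
                · have hx : glue hKS u xout k = u ⟨k.1, hk⟩ := glue_pos hKS u xout k hk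
                  have ha : ∀ v, glue hKS b v k = b ⟨k.1, hk⟩ :=
                    fun v => glue_pos hKS b v k hk
                  have hrx := restr_glue_mem (X := X) hKS hk u xout
                  have hra := fun v => restr_glue_mem (X := A) hKS hk b v
                  calc ∑ v : (i : {j // j ∈ S \ K}) → A i.1,
                        q k * F k ((glue hKS u xout) k) ((glue hKS b v) k) *
                        R k ((glue hKS u xout) k) ((glue hKS b v) k)
                          (restr (erase_sub S k.1) (glue hKS u xout))
                          (restr (erase_sub S k.1) (glue hKS b v))
                      = ∑ v : (i : {j // j ∈ S \ K}) → A i.1,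
                        q k * F k (u ⟨k.1, hk⟩) (b ⟨k.1, hk⟩) *
                        R k (u ⟨k.1, hk⟩) (b ⟨k.1, hk⟩)
                          (glue (Finset.erase_subset_erase k.1 hKS) (restr (erase_sub K k.1) u)
                            (restr (sdiff_erase_sub hKS hk) xout))
                          (glue (Finset.erase_subset_erase k.1 hKS) (restr (erase_sub K k.1) b)
                            (restr (sdiff_erase_sub hKS hk) v)) := by
                        apply Finset.sum_congr rfl
                        intro v _
                        rw [hx, ha v, hrx, hra v]
                    _ = q k * F k (u ⟨k.1, hk⟩) (b ⟨k.1, hk⟩) *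
                        ∑ v2 : (i : {j // j ∈ (S.erase k.1) \ (K.erase k.1)}) → A i.1,
                          R k (u ⟨k.1, hk⟩) (b ⟨k.1, hk⟩)
                            (glue (Finset.erase_subset_erase k.1 hKS) (restr (erase_sub K k.1) u)
                              (restr (sdiff_erase_sub hKS hk) xout))
                            (glue (Finset.erase_subset_erase k.1 hKS) (restr (erase_sub K k.1) b)
                              v2) := by
                        rw [← Finset.mul_sum]
                        exact congrArg (fun s => q k * F k (u ⟨k.1, hk⟩) (b ⟨k.1, hk⟩) * s)
                          (sum_restrEquiv (sdiff_erase_sub hKS hk) (sdiff_erase_sub' hKS hk)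
                            (fun w => R k (u ⟨k.1, hk⟩) (b ⟨k.1, hk⟩)
                              (glue (Finset.erase_subset_erase k.1 hKS)
                                (restr (erase_sub K k.1) u)
                                (restr (sdiff_erase_sub hKS hk) xout))
                              (glue (Finset.erase_subset_erase k.1 hKS)
                                (restr (erase_sub K k.1) b) w)))
                    _ = q k * C k u b := by
                        simp only [hCdef, dif_pos hk]
                        refine Eq.trans ?_ (congrArg (fun s : Corr X A K => q k * s u b)
                          (dif_pos hk)).symm
                        beta_reduce
                        ring
                · have hkS : k.1 ∈ S \ K := Finset.mem_sdiff.mpr ⟨k.2, hk⟩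
                  have hkE : k.1 ∉ (S.erase k.1) \ K :=
                    fun h => (Finset.mem_erase.mp (Finset.mem_sdiff.mp h).1).1 rfl
                  have hx : glue hKS u xout k = xout ⟨k.1, Finset.mem_sdiff.mpr ⟨k.2, hk⟩⟩ :=
                    glue_neg hKS u xout k hk
                  have hrx := restr_glue_not_mem (X := X) hKS hk u xout
                  rw [sum_ins hkS (fun v => q k * F k ((glue hKS u xout) k) ((glue hKS b v) k) *
                    R k ((glue hKS u xout) k) ((glue hKS b v) k)
                      (restr (erase_sub S k.1) (glue hKS u xout))
                      (restr (erase_sub S k.1) (glue hKS b v)))]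
                  have hstep : ∀ (ak : A k.1) (v' : (i : {j // j ∈ (S \ K).erase k.1}) → A i.1),
                      q k * F k ((glue hKS u xout) k) ((glue hKS b (ins hkS ak v')) k) *
                      R k ((glue hKS u xout) k) ((glue hKS b (ins hkS ak v')) k)
                        (restr (erase_sub S k.1) (glue hKS u xout))
                        (restr (erase_sub S k.1) (glue hKS b (ins hkS ak v')))
                      = q k * F k (xout ⟨k.1, Finset.mem_sdiff.mpr ⟨k.2, hk⟩⟩) ak *
                        R k (xout ⟨k.1, Finset.mem_sdiff.mpr ⟨k.2, hk⟩⟩) ak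
                          (glue (sub_erase_of_not_mem hKS hk) u
                            (restr (erase_sdiff_sub S K k.1) xout))
                          (glue (sub_erase_of_not_mem hKS hk) b
                            (restr (sub_erase_of_not_mem (erase_sdiff_sub S K k.1) hkE) v')) := by
                    intro ak v'
                    have ha : glue hKS b (ins hkS ak v') k = ak := by
                      rw [glue_neg hKS b _ k hk]
                      exact ins_self hkS ak v' _
                    have hra := restr_glue_not_mem (X := A) hKS hk b (ins hkS ak v')
                    rw [hx, ha, hrx, hra,
                      restr_ins_not_mem (X := A) hkS (erase_sdiff_sub S K k.1) hkE ak v']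
                  rw [Finset.sum_congr rfl fun ak _ => Finset.sum_congr rfl
                    fun v' _ => hstep ak v']
                  have hsum2 : ∀ ak : A k.1,
                      ∑ v' : (i : {j // j ∈ (S \ K).erase k.1}) → A i.1,
                        q k * F k (xout ⟨k.1, Finset.mem_sdiff.mpr ⟨k.2, hk⟩⟩) ak *
                        R k (xout ⟨k.1, Finset.mem_sdiff.mpr ⟨k.2, hk⟩⟩) ak
                          (glue (sub_erase_of_not_mem hKS hk) u
                            (restr (erase_sdiff_sub S K k.1) xout))
                          (glue (sub_erase_of_not_mem hKS hk) b
                            (restr (sub_erase_of_not_mem (erase_sdiff_sub S K k.1) hkE) v'))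
                      = q k * F k (xout ⟨k.1, Finset.mem_sdiff.mpr ⟨k.2, hk⟩⟩) ak *
                        ∑ v2 : (i : {j // j ∈ (S.erase k.1) \ K}) → A i.1,
                          R k (xout ⟨k.1, Finset.mem_sdiff.mpr ⟨k.2, hk⟩⟩) ak
                            (glue (sub_erase_of_not_mem hKS hk) u
                              (restr (erase_sdiff_sub S K k.1) xout))
                            (glue (sub_erase_of_not_mem hKS hk) b v2) := by
                    intro ak
                    rw [← Finset.mul_sum]
                    exact congrArg (fun s => q k *
                        F k (xout ⟨k.1, Finset.mem_sdiff.mpr ⟨k.2, hk⟩⟩) ak * s)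
                      (sum_restrEquiv (sub_erase_of_not_mem (erase_sdiff_sub S K k.1) hkE)
                        (erase_sdiff_sub4 S K k.1)
                        (fun v2 => R k (xout ⟨k.1, Finset.mem_sdiff.mpr ⟨k.2, hk⟩⟩) ak
                          (glue (sub_erase_of_not_mem hKS hk) u
                            (restr (erase_sdiff_sub S K k.1) xout))
                          (glue (sub_erase_of_not_mem hKS hk) b v2)))
                  rw [Finset.sum_congr rfl fun ak _ => hsum2 ak]
                  simp only [hCdef, dif_neg hk]
                  refine Eq.trans ?_ (congrArg (fun s : Corr X A K => q k * s u b)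
                    (dif_neg hk)).symm
                  beta_reduce
                  rw [Finset.mul_sum]
                  apply Finset.sum_congr rfl
                  intro ak _
                  ring
        have heq2 : (fun (u : (i : {j // j ∈ K}) → X i.1) (b : (i : {j // j ∈ K}) → A i.1) =>
            ∑ v : (i : {j // j ∈ S \ K}) → A i.1, P (glue hKS u xout) (glue hKS b v))
            = fun u b => ∑ k : {j // j ∈ S}, q k * C k u b := by
          funext u b
          rw [hident u b, ← Finset.univ_eq_attach]
        rw [heq2]
        exact convex_isCausal K.card K le_rfl {j // j ∈ S} q C hq
          (by rw [Finset.univ_eq_attach]; exact hq1) hCcaus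

end Main
/-- the marginal of a causal correlation over the outputs of the parties outside
a nonempty strict subset `K`, with the inputs of those outside parties fixed, is causal. -/
theorem marginal_of_causal_isCausal {ι : Type} [DecidableEq ι]
    (X A : ι → Type) [∀ i, Fintype (A i)] (S : Finset ι)
    (P : Corr X A S) (hP : IsCausal X A S P)
    (K : Finset ι) (hK : K.Nonempty) (hKS : K ⊂ S)
    (xout : (i : {j // j ∈ S \ K}) → X i.1) :
    IsCausal X A K (fun (u : (i : {j // j ∈ K}) → X i.1) (b : (i : {j // j ∈ K}) → A i.1) =>
      ∑ v : (i : {j // j ∈ S \ K}) → A i.1,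
        P (glue hKS.subset u xout) (glue hKS.subset b v)) := by
  exact marginal_aux X A S.card S le_rfl P hP K hK hKS.subset xout
end
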